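/- Let K be an abstract elementary class in a vocabulary τ that does not contain the empty structure. Then there exists a vocabulary τ′ ⊇ τ with |τ′| = |τ| + LS(K) and a universal class K′ in the vocabulary τ′ such that the reduct map M′ ↦ M′↾τ is a faithful functor from K′ to K which preserves directed colimits and is surjective on objects. -/

import Mathlib

universe u v w

open CategoryTheory CategoryTheory.Limits Cardinal FirstOrder

noncomputable section

namespace Paper

/-! ## General category-theoretic notions -/

/-- A preorder is `κ`-directed if every subset of cardinality `< κ` has an upper bound. -/
def CardDirected (κ : Cardinal.{u}) (J : Type u) [Preorder J] : Prop :=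
  ∀ S : Set J, #S < κ → ∃ j : J, ∀ s ∈ S, s ≤ j

/-- A bundled preordered index type. -/
structure IndexPoset : Type (u + 1) where
  J : Type u
  pre : Preorder J

instance (P : IndexPoset.{u}) : Preorder P.J := P.pre

/-- `C` has all `κ`-directed colimits (indexed by `κ`-directed preorders in `Type u`).
For `κ = ℵ₀` these are the usual directed colimits. -/
def HasCardDirectedColimits (κ : Cardinal.{u}) (C : Type v) [Category.{w} C] : Prop :=
  ∀ (J : Type u) [Preorder J], CardDirected κ J → HasColimitsOfShape J C

/-- An object `M` is `κ`-presentable if its hom-functor `C(M,-)` preserves `κ`-directed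
colimits, i.e. every morphism from `M` into a `κ`-directed colimit factors essentially
uniquely through some stage of the diagram.  For `κ = ℵ₀` this is `ℵ₀`-presentability. -/
def IsCardPresentable {C : Type v} [Category.{w} C] (κ : Cardinal.{u}) (M : C) : Prop :=
  ∀ (J : Type u) [Preorder J], CardDirected κ J →
    ∀ (D : J ⥤ C) (c : Cocone D), IsColimit c →
      (∀ f : M ⟶ c.pt, ∃ (j : J) (g : M ⟶ D.obj j), g ≫ c.ι.app j = f) ∧
      (∀ (j : J) (g₁ g₂ : M ⟶ D.obj j), g₁ ≫ c.ι.app j = g₂ ≫ c.ι.app j →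
        ∃ (j' : J) (h : j ≤ j'), g₁ ≫ D.map (homOfLE h) = g₂ ≫ D.map (homOfLE h))

/-- `C` is `κ`-accessible: it has all `κ`-directed colimits and there is a *set* `S`
of `κ`-presentable objects such that every object of `C` is a `κ`-directed colimit
of objects from `S`. -/
def IsCardAccessible (κ : Cardinal.{u}) (C : Type v) [Category.{w} C] : Prop :=
  HasCardDirectedColimits.{u} κ C ∧
    ∃ S : Set C, Small.{u} S ∧ (∀ M ∈ S, IsCardPresentable.{u} κ M) ∧
      ∀ X : C, ∃ (P : IndexPoset.{u}) (D : P.J ⥤ C) (c : Cocone D),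
        CardDirected κ P.J ∧ (∀ j, D.obj j ∈ S) ∧ c.pt = X ∧ Nonempty (IsColimit c)

/-- `C` has all connected limits (limits over small connected index categories). -/
def HasConnectedLimits (C : Type v) [Category.{w} C] : Prop :=
  ∀ (J : Type u) [SmallCategory J], IsConnected J → HasLimitsOfShape J C

/-- A functor preserves directed colimits. -/
def PreservesDirectedColimits {D : Type*} [Category D] {C : Type*} [Category C]
    (F : D ⥤ C) : Prop :=
  ∀ (J : Type u) [Preorder J], IsDirected J (· ≤ ·) → Nonempty J →
    PreservesColimitsOfShape J F

/-- A functor `F : L ⥤ C` is *pullback-full* if for every set-indexed family of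
morphisms `f i : B i ⟶ C₀` in `L` and every family `g i : A ⟶ F.obj (B i)` in `C`
with `F.map (f i) ∘ g i` all equal, the family `g` lifts along `F`. -/
def PullbackFull {L : Type*} [Category L] {C : Type*} [Category C] (F : L ⥤ C) : Prop :=
  ∀ (I : Type u) (B : I → L) (C₀ : L) (f : ∀ i, B i ⟶ C₀) (A : C)
    (g : ∀ i, A ⟶ F.obj (B i)),
    (∀ i j, g i ≫ F.map (f i) = g j ≫ F.map (f j)) →
    ∃ (A' : L) (hA : F.obj A' = A) (gb : ∀ i, A' ⟶ B i),
      ∀ i, F.map (gb i) = eqToHom hA ≫ g i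

/-! ## Classes of structures in a finitary vocabulary

A `SetStruct L W` is a `τ`-structure (for the finitary first-order vocabulary `L`)
whose universe is a small subset of the ambient class `W` of elements.  The
interpretations of function and relation symbols are given as total functions on
tuples from `W` (their values outside the universe are irrelevant junk), so that the
substructure relation can be taken literally. -/

variable (L : FirstOrder.Language.{u, u}) (W : Type (u + 1))

structure SetStruct : Type (u + 1) where
  carrier : Set W
  small : Small.{u} carrier
  fn : ∀ n : ℕ, L.Functions n → (Fin n → W) → W
  rel : ∀ n : ℕ, L.Relations n → (Fin n → W) → Prop
  fn_mem : ∀ (n : ℕ) (f : L.Functions n) (x : Fin n → W),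
    (∀ i, x i ∈ carrier) → fn n f x ∈ carrier

variable {L W}

theorem SetStruct.ext' {M N : SetStruct L W} (hc : M.carrier = N.carrier)
    (hf : ∀ n f x, M.fn n f x = N.fn n f x)
    (hr : ∀ n r x, M.rel n r x ↔ N.rel n r x) : M = N := by
  rcases M with ⟨c₁, s₁, f₁, r₁, m₁⟩
  rcases N with ⟨c₂, s₂, f₂, r₂, m₂⟩
  dsimp only at hc hf hr
  subst hc
  have hf' : f₁ = f₂ := by funext n f x; exact hf n f x
  have hr' : r₁ = r₂ := by funext n r x; exact propext (hr n r x)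
  subst hf'; subst hr'
  rfl

/-- `M` is a substructure of `N`:  the universe of `M` is contained in that of `N` and
the interpretations of all function and relation symbols agree on tuples from `M`
(in particular relations are both preserved and reflected). -/
def Sub (M N : SetStruct L W) : Prop :=
  M.carrier ⊆ N.carrier ∧
    (∀ (n : ℕ) (f : L.Functions n) (x : Fin n → W),
      (∀ i, x i ∈ M.carrier) → M.fn n f x = N.fn n f x) ∧
    (∀ (n : ℕ) (r : L.Relations n) (x : Fin n → W),
      (∀ i, x i ∈ M.carrier) → (M.rel n r x ↔ N.rel n r x))

theorem Sub.refl (M : SetStruct L W) : Sub M M :=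
  ⟨le_refl _, fun _ _ _ _ => rfl, fun _ _ _ _ => Iff.rfl⟩

theorem Sub.trans {M N P : SetStruct L W} (h₁ : Sub M N) (h₂ : Sub N P) : Sub M P :=
  ⟨h₁.1.trans h₂.1,
   fun n f x hx => (h₁.2.1 n f x hx).trans (h₂.2.1 n f x fun i => h₁.1 (hx i)),
   fun n r x hx => (h₁.2.2 n r x hx).trans (h₂.2.2 n r x fun i => h₁.1 (hx i))⟩

/-- A (substructure) embedding of `τ`-structures: an injective map preserving all
function symbols and preserving and reflecting all relation symbols. -/
structure Emb (M N : SetStruct L W) : Type (u + 1) where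
  toFun : M.carrier → N.carrier
  inj : Function.Injective toFun
  map_fn : ∀ (n : ℕ) (f : L.Functions n) (x : Fin n → M.carrier),
    (toFun ⟨M.fn n f fun i => (x i : W), M.fn_mem n f _ fun i => (x i).2⟩ : W) =
      N.fn n f fun i => (toFun (x i) : W)
  map_rel : ∀ (n : ℕ) (r : L.Relations n) (x : Fin n → M.carrier),
    M.rel n r (fun i => (x i : W)) ↔ N.rel n r fun i => (toFun (x i) : W)

theorem Emb.ext' {M N : SetStruct L W} {e₁ e₂ : Emb M N}
    (h : e₁.toFun = e₂.toFun) : e₁ = e₂ := by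
  rcases e₁ with ⟨f₁, i₁, mf₁, mr₁⟩
  rcases e₂ with ⟨f₂, i₂, mf₂, mr₂⟩
  dsimp only at h
  subst h
  rfl

/-- The identity embedding. -/
def Emb.refl (M : SetStruct L W) : Emb M M where
  toFun := id
  inj := fun _ _ h => h
  map_fn _ _ _ := rfl
  map_rel _ _ _ := Iff.rfl

/-- Composition of embeddings. -/
def Emb.comp {M N P : SetStruct L W} (g : Emb N P) (f : Emb M N) : Emb M P where
  toFun := g.toFun ∘ f.toFun
  inj := g.inj.comp f.inj
  map_fn n φ x := by
    have h1 : f.toFun ⟨M.fn n φ fun i => (x i : W), M.fn_mem n φ _ fun i => (x i).2⟩ =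
        ⟨N.fn n φ fun i => (f.toFun (x i) : W), N.fn_mem n φ _ fun i => (f.toFun (x i)).2⟩ :=
      Subtype.ext (f.map_fn n φ x)
    show (g.toFun (f.toFun _) : W) = _
    rw [h1]
    exact g.map_fn n φ fun i => f.toFun (x i)
  map_rel n r x :=
    (f.map_rel n r x).trans (g.map_rel n r fun i => f.toFun (x i))

/-- The inclusion embedding of a substructure. -/
def Sub.emb {M N : SetStruct L W} (h : Sub M N) : Emb M N where
  toFun x := ⟨(x : W), h.1 x.2⟩
  inj := by
    intro a b hab
    have hv : (a : W) = (b : W) := by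
      have hv0 := congrArg Subtype.val hab
      exact hv0
    exact Subtype.ext hv
  map_fn n f x := h.2.1 n f _ fun i => (x i).2
  map_rel n r x := h.2.2 n r _ fun i => (x i).2

/-- The image structure `f[M] ⊆ N` of an embedding `f : M → N`. -/
def Emb.imageStruct {M N : SetStruct L W} (e : Emb M N) : SetStruct L W where
  carrier := Set.range fun x : M.carrier => (e.toFun x : W)
  small := by
    haveI := M.small
    exact small_range _
  fn := N.fn
  rel := N.rel
  fn_mem := by
    intro n f x hx
    choose y hy using hx
    have hy' : ∀ i, (e.toFun (y i) : W) = x i := hy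
    refine ⟨⟨M.fn n f fun i => (y i : W), M.fn_mem n f _ fun i => (y i).2⟩, ?_⟩
    show (e.toFun ⟨M.fn n f fun i => (y i : W), M.fn_mem n f _ fun i => (y i).2⟩ : W) =
      N.fn n f x
    rw [e.map_fn n f y]
    exact congrArg (N.fn n f) (funext hy')

theorem Emb.imageStruct_sub {M N : SetStruct L W} (e : Emb M N) : Sub e.imageStruct N := by
  refine ⟨?_, fun _ _ _ _ => rfl, fun _ _ _ _ => Iff.rfl⟩
  rintro _ ⟨x, rfl⟩
  exact (e.toFun x).2

/-- Corestriction of an embedding onto its image. -/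
def Emb.corestrict {M N : SetStruct L W} (e : Emb M N) : Emb M e.imageStruct where
  toFun x := ⟨(e.toFun x : W), ⟨x, rfl⟩⟩
  inj := by
    intro a b h
    have hv : (e.toFun a : W) = (e.toFun b : W) := by
      have hv0 := congrArg Subtype.val h
      exact hv0
    exact e.inj (Subtype.ext hv)
  map_fn n f x := e.map_fn n f x
  map_rel n r x := e.map_rel n r x

theorem Emb.corestrict_surjective {M N : SetStruct L W} (e : Emb M N) :
    Function.Surjective e.corestrict.toFun := by
  rintro ⟨y, x, rfl⟩
  exact ⟨x, rfl⟩

theorem imageStruct_refl (M : SetStruct L W) : (Emb.refl M).imageStruct = M := by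
  refine SetStruct.ext' ?_ (fun _ _ _ => rfl) (fun _ _ _ => Iff.rfl)
  exact Subtype.range_coe

/-! ## Universal classes -/

variable (L W)

/-- A *universal class*: a class of `τ`-structures closed under isomorphism,
substructures, and unions of directed systems of substructure inclusions. -/
structure UniversalClass : Type (u + 2) where
  K : Set (SetStruct L W)
  iso_closed : ∀ {M N : SetStruct L W} (e : Emb M N),
    Function.Surjective e.toFun → M ∈ K → N ∈ K
  sub_closed : ∀ {M N : SetStruct L W}, Sub M N → N ∈ K → M ∈ K
  union_closed : ∀ (P : IndexPoset.{u}), IsDirected P.J (· ≤ ·) → Nonempty P.J →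
    ∀ D : P.J → SetStruct L W, (∀ j, D j ∈ K) →
      (∀ ⦃j j' : P.J⦄, j ≤ j' → Sub (D j) (D j')) →
      ∀ MU : SetStruct L W, MU.carrier = ⋃ j, (D j).carrier →
        (∀ j, Sub (D j) MU) → MU ∈ K

variable {L W}

/-- The category associated to a universal class: objects are its members,
morphisms are all substructure embeddings. -/
def UnivCat (U : UniversalClass L W) : Type (u + 1) :=
  {M : SetStruct L W // M ∈ U.K}

instance (U : UniversalClass L W) : Category (UnivCat U) where
  Hom M N := Emb M.1 N.1
  id M := Emb.refl M.1
  comp f g := g.comp f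
  id_comp _ := Emb.ext' rfl
  comp_id _ := Emb.ext' rfl
  assoc _ _ _ := Emb.ext' rfl

/-! ## Abstract elementary classes -/

variable (L W)

/-- The Löwenheim–Skolem–Tarski property for the (set-sized) cardinal `κ`. -/
def LSTWitness (K : Set (SetStruct L W))
    (le : SetStruct L W → SetStruct L W → Prop) (κ : Cardinal.{u + 1}) : Prop :=
  κ < Cardinal.univ.{u, u + 1} ∧ Cardinal.lift.{u + 1} L.card ≤ κ ∧ ℵ₀ ≤ κ ∧
    ∀ M ∈ K, ∀ s : Set W, s ⊆ M.carrier →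
      ∃ M₀ : SetStruct L W, le M₀ M ∧ s ⊆ M₀.carrier ∧ #M₀.carrier ≤ #s + κ

/-- An abstract elementary class (AEC) in the finitary vocabulary `L`: an abstract
class (a class of structures closed under isomorphism together with a strong
substructure order `le` refining the substructure relation and respecting
isomorphisms) satisfying coherence, the chain (Tarski–Vaught) axioms, and the
Löwenheim–Skolem–Tarski axiom. -/
structure AEC : Type (u + 2) where
  K : Set (SetStruct L W)
  le : SetStruct L W → SetStruct L W → Prop
  le_mem : ∀ {M N : SetStruct L W}, le M N → M ∈ K ∧ N ∈ K
  le_refl : ∀ M ∈ K, le M M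
  le_trans : ∀ {M N P : SetStruct L W}, le M N → le N P → le M P
  le_antisymm : ∀ {M N : SetStruct L W}, le M N → le N M → M = N
  le_sub : ∀ {M N : SetStruct L W}, le M N → Sub M N
  iso_closed : ∀ {M N : SetStruct L W} (e : Emb M N),
    Function.Surjective e.toFun → M ∈ K → N ∈ K
  le_iso : ∀ {M N N' : SetStruct L W} (e : Emb N N'),
    Function.Surjective e.toFun → ∀ h : le M N,
      le (Emb.imageStruct (Emb.comp e (Sub.emb (le_sub h)))) N'
  coherence : ∀ {M₀ M₁ M₂ : SetStruct L W},
    Sub M₀ M₁ → le M₁ M₂ → le M₀ M₂ → le M₀ M₁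
  chain : ∀ (P : IndexPoset.{u}), IsDirected P.J (· ≤ ·) → Nonempty P.J →
    ∀ D : P.J → SetStruct L W, (∀ ⦃j j' : P.J⦄, j ≤ j' → le (D j) (D j')) →
      ∃ MU : SetStruct L W, MU ∈ K ∧ MU.carrier = ⋃ j, (D j).carrier ∧
        (∀ j, le (D j) MU) ∧ ∀ N : SetStruct L W, (∀ j, le (D j) N) → le MU N
  lst : ∃ κ : Cardinal.{u + 1}, LSTWitness L W K le κ

variable {L W}

/-- The Löwenheim–Skolem–Tarski number of an AEC. -/
def AEC.LS (A : AEC L W) : Cardinal.{u + 1} :=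
  sInf {κ | LSTWitness L W A.K A.le κ}

theorem AEC.le_image_comp (A : AEC L W) {M N P : SetStruct L W}
    {f : Emb M N} {g : Emb N P}
    (hf : A.le f.imageStruct N) (hg : A.le g.imageStruct P) :
    A.le (g.comp f).imageStruct P := by
  have h := A.le_iso g.corestrict g.corestrict_surjective hf
  have key : (Emb.comp g.corestrict (Sub.emb (A.le_sub hf))).imageStruct =
      (g.comp f).imageStruct := by
    refine SetStruct.ext' ?_ (fun _ _ _ => rfl) (fun _ _ _ => Iff.rfl)
    ext w
    constructor
    · rintro ⟨x, hx⟩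
      obtain ⟨z, hz⟩ := x.2
      refine ⟨z, ?_⟩
      rw [← hx]
      exact congrArg (fun t : N.carrier => (g.toFun t : W)) (Subtype.ext hz)
    · rintro ⟨z, hz⟩
      refine ⟨⟨(f.toFun z : W), ⟨z, rfl⟩⟩, ?_⟩
      rw [← hz]
      exact congrArg (fun t : N.carrier => (g.toFun t : W)) (Subtype.ext rfl)
  rw [key] at h
  exact A.le_trans h hg

/-- The category associated to an AEC: objects are its members, morphisms are the
`K`-embeddings, i.e. those embeddings `f : M → N` whose image `f[M]` is a strong
(`≤`) substructure of `N`. -/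
def AEC.Cat (A : AEC L W) : Type (u + 1) :=
  {M : SetStruct L W // M ∈ A.K}

instance (A : AEC L W) : Category A.Cat where
  Hom M N := {e : Emb M.1 N.1 // A.le e.imageStruct N.1}
  id M := ⟨Emb.refl M.1, by rw [imageStruct_refl]; exact A.le_refl M.1 M.2⟩
  comp f g := ⟨g.1.comp f.1, A.le_image_comp f.2 g.2⟩
  id_comp _ := Subtype.ext (Emb.ext' rfl)
  comp_id _ := Subtype.ext (Emb.ext' rfl)
  assoc _ _ _ := Subtype.ext (Emb.ext' rfl)

/-- The closure `cl^N(s)`: the intersection of the universes of all strong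
substructures of `N` containing `s`. -/
def AEC.clSet (A : AEC L W) (N : SetStruct L W) (s : Set W) : Set W :=
  ⋂ M ∈ {M : SetStruct L W | A.le M N ∧ s ⊆ M.carrier}, M.carrier

/-- `K` admits intersections: for every `N ∈ K` and `s ⊆ UN`, the set `cl^N(s)` is
the universe of a strong substructure of `N`. -/
def AEC.AdmitsIntersections (A : AEC L W) : Prop :=
  ∀ N ∈ A.K, ∀ s : Set W, s ⊆ N.carrier →
    ∃ M₀ : SetStruct L W, A.le M₀ N ∧ M₀.carrier = A.clSet N s

theorem AEC.clSet_subset (A : AEC L W) {N : SetStruct L W} (hN : N ∈ A.K)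
    {s : Set W} (hs : s ⊆ N.carrier) : A.clSet N s ⊆ N.carrier :=
  Set.biInter_subset_of_mem (⟨A.le_refl N hN, hs⟩ : _ ∈ {M : SetStruct L W | A.le M N ∧ s ⊆ M.carrier})

/-- The canonical structure with universe `cl^N(s)` (the restriction of `N`). -/
def AEC.clStruct (A : AEC L W) (N : SetStruct L W) (s : Set W)
    (hN : N ∈ A.K) (hs : s ⊆ N.carrier) : SetStruct L W where
  carrier := A.clSet N s
  small := by
    haveI := N.small
    exact small_subset (A.clSet_subset hN hs)
  fn := N.fn
  rel := N.rel
  fn_mem := by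
    intro n f x hx
    refine Set.mem_iInter₂.2 fun M hM => ?_
    have hxM : ∀ i, x i ∈ M.carrier := fun i => Set.mem_iInter₂.1 (hx i) M hM
    have hfn := (A.le_sub hM.1).2.1 n f x hxM
    exact hfn ▸ M.fn_mem n f x hxM

/-- `K` is pseudo-universal: it admits intersections and any two `K`-embeddings
agreeing on a set `s` agree on `cl(s)`. -/
def AEC.PseudoUniversal (A : AEC L W) : Prop :=
  A.AdmitsIntersections ∧
    ∀ M N : SetStruct L W, M ∈ A.K → N ∈ A.K →
      ∀ f g : Emb M N, A.le f.imageStruct N → A.le g.imageStruct N →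
        ∀ s : Set W, s ⊆ M.carrier →
          (∀ x : M.carrier, (x : W) ∈ s → f.toFun x = g.toFun x) →
          ∀ x : M.carrier, (x : W) ∈ A.clSet M s → f.toFun x = g.toFun x

/-- The reduct of a structure along a vocabulary morphism `φ : L →ᴸ L'`. -/
def SetStruct.reduct {L L' : FirstOrder.Language.{u, u}} (φ : L →ᴸ L')
    {W : Type (u + 1)} (M : SetStruct L' W) : SetStruct L W where
  carrier := M.carrier
  small := M.small
  fn n f x := M.fn n (φ.onFunction f) x
  rel n r x := M.rel n (φ.onRelation r) x
  fn_mem n f x hx := M.fn_mem n (φ.onFunction f) x hx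

/-- The subset of `N` generated by `s`: the least subset of the universe of `N`
containing `s` and closed under all functions of `N`. -/
def genSet (N : SetStruct L W) (s : Set W) : Set W :=
  ⋂ t ∈ {t : Set W | s ⊆ t ∧ t ⊆ N.carrier ∧
    ∀ (n : ℕ) (f : L.Functions n) (x : Fin n → W), (∀ i, x i ∈ t) → N.fn n f x ∈ t}, t


/-- The underlying embedding of a morphism in the category of a universal class. -/
def univHomEmb {U : UniversalClass L W} {M N : UnivCat U} (e : M ⟶ N) : Emb M.1 N.1 := e

/-- The underlying embedding of a morphism in the category of an AEC. -/
def aecHomEmb {A : AEC L W} {M N : A.Cat} (e : M ⟶ N) : Emb M.1 N.1 :=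
  (e : {f : Emb M.1 N.1 // A.le f.imageStruct N.1}).1

/-! ## Auxiliary development for Statement 6 -/

namespace S6

variable {L : FirstOrder.Language.{u, u}} {W : Type (u + 1)}

/-! ### Generated sets -/

theorem subset_genSet {N : SetStruct L W} {s : Set W} : s ⊆ genSet N s := by
  intro w hw
  exact Set.mem_iInter₂.2 fun t ht => ht.1 hw

theorem genSet_subset {N : SetStruct L W} {s t : Set W} (h1 : s ⊆ t) (h2 : t ⊆ N.carrier)
    (h3 : ∀ (n : ℕ) (f : L.Functions n) (x : Fin n → W), (∀ i, x i ∈ t) → N.fn n f x ∈ t) :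
    genSet N s ⊆ t :=
  Set.biInter_subset_of_mem (show t ∈ _ from ⟨h1, h2, h3⟩)

theorem genSet_subset_carrier {N : SetStruct L W} {s : Set W} (hs : s ⊆ N.carrier) :
    genSet N s ⊆ N.carrier :=
  genSet_subset hs (le_refl _) fun n f x hx => N.fn_mem n f x hx

theorem genSet_closed {N : SetStruct L W} {s : Set W} :
    ∀ (n : ℕ) (f : L.Functions n) (x : Fin n → W), (∀ i, x i ∈ genSet N s) →
      N.fn n f x ∈ genSet N s := by
  intro n f x hx
  refine Set.mem_iInter₂.2 fun t ht => ?_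
  exact ht.2.2 n f x fun i => Set.mem_iInter₂.1 (hx i) t ht

theorem genSet_mono {N : SetStruct L W} {s t : Set W} (hst : s ⊆ t) (ht : t ⊆ N.carrier) :
    genSet N s ⊆ genSet N t :=
  genSet_subset (hst.trans subset_genSet) (genSet_subset_carrier ht)
    fun n f x hx => genSet_closed n f x hx

/-- Generated sets only depend on the ambient structure through substructures. -/
theorem gen_sub_eq {M N : SetStruct L W} (hMN : Sub M N) {s : Set W} (hs : s ⊆ M.carrier) :
    genSet M s = genSet N s := by
  apply Set.Subset.antisymm
  · -- genSet N s qualifies for the M-family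
    refine genSet_subset ?_ ?_ ?_
    · exact subset_genSet
    · -- genSet N s ⊆ M.carrier since M.carrier is in the N-family
      refine genSet_subset hs hMN.1 ?_
      intro n f x hx
      rw [← hMN.2.1 n f x hx]
      exact M.fn_mem n f x hx
    · intro n f x hx
      have hxc : ∀ i, x i ∈ M.carrier := by
        intro i
        refine genSet_subset hs hMN.1 ?_ (hx i)
        intro n f x hx
        rw [← hMN.2.1 n f x hx]
        exact M.fn_mem n f x hx
      rw [hMN.2.1 n f x hxc]
      exact genSet_closed n f x hx
  · refine genSet_subset subset_genSet ((genSet_subset_carrier hs).trans hMN.1) ?_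
    intro n f x hx
    have hxc : ∀ i, x i ∈ M.carrier := fun i => genSet_subset_carrier hs (hx i)
    rw [← hMN.2.1 n f x hxc]
    exact genSet_closed n f x hx

/-! ### A transfer lemma for the strong substructure relation -/

/-- If `M ≤ N`, `Y` is a copy of `N` (same carrier, same functions/relations on tuples
from the carrier) and `X` is a literal copy of `Y` restricted to the carrier of `M`,
then `X ≤ Y`. -/
theorem le_transfer (A : AEC L W) {M N : SetStruct L W} (h : A.le M N)
    {Y : SetStruct L W} (hYc : Y.carrier = N.carrier)
    (hYf : ∀ n f x, (∀ i, x i ∈ N.carrier) → Y.fn n f x = N.fn n f x)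
    (hYr : ∀ n r x, (∀ i, x i ∈ N.carrier) → (Y.rel n r x ↔ N.rel n r x))
    {X : SetStruct L W} (hXc : X.carrier = M.carrier)
    (hXf : ∀ n f x, X.fn n f x = Y.fn n f x) (hXr : ∀ n r x, X.rel n r x ↔ Y.rel n r x) :
    A.le X Y := by
  let e : Emb N Y :=
    { toFun := fun x => ⟨(x : W), by rw [hYc]; exact x.2⟩
      inj := by
        intro a b hab
        apply Subtype.ext
        have h2 := congrArg Subtype.val hab
        exact h2
      map_fn := fun n f x => (hYf n f _ fun i => (x i).2).symm
      map_rel := fun n r x => (hYr n r _ fun i => (x i).2).symm }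
  have hsurj : Function.Surjective e.toFun := by
    rintro ⟨y, hy⟩
    exact ⟨⟨y, hYc.symm ▸ hy⟩, rfl⟩
  have h' := A.le_iso e hsurj h
  have key : (Emb.comp e (Sub.emb (A.le_sub h))).imageStruct = X := by
    refine SetStruct.ext' ?_ (fun n f x => (hXf n f x).symm) (fun n r x => (hXr n r x).symm)
    show Set.range _ = X.carrier
    rw [hXc]
    ext w
    constructor
    · rintro ⟨x, rfl⟩
      exact x.2
    · intro hw
      exact ⟨⟨w, hw⟩, rfl⟩
  rwa [key] at h'

/-! ### The chain axiom for small directed preorders in any universe -/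

theorem chain' (A : AEC L W) (J : Type v) [Preorder J] [Small.{u} J]
    (hdir : IsDirected J (· ≤ ·)) (hne : Nonempty J) (D : J → SetStruct L W)
    (hmono : ∀ ⦃j j' : J⦄, j ≤ j' → A.le (D j) (D j')) :
    ∃ MU : SetStruct L W, MU ∈ A.K ∧ MU.carrier = ⋃ j, (D j).carrier ∧
      (∀ j, A.le (D j) MU) ∧ ∀ N : SetStruct L W, (∀ j, A.le (D j) N) → A.le MU N := by
  let e := equivShrink.{u} J
  letI pre : Preorder (Shrink.{u} J) := Preorder.lift e.symm
  have hd : IsDirected (Shrink.{u} J) (· ≤ ·) := by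
    constructor
    intro a b
    obtain ⟨c, hc1, hc2⟩ := hdir.directed (e.symm a) (e.symm b)
    refine ⟨e c, ?_, ?_⟩
    · show e.symm a ≤ e.symm (e c)
      rwa [e.symm_apply_apply]
    · show e.symm b ≤ e.symm (e c)
      rwa [e.symm_apply_apply]
  have hne' : Nonempty (Shrink.{u} J) := ⟨e hne.some⟩
  obtain ⟨MU, h1, h2, h3, h4⟩ := A.chain ⟨Shrink.{u} J, pre⟩ hd hne'
    (fun j => D (e.symm j)) (fun j j' hj => hmono hj)
  refine ⟨MU, h1, ?_, fun j => ?_, fun N hN => h4 N fun j => hN _⟩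
  · rw [h2]
    exact e.symm.surjective.iUnion_comp fun j => (D j).carrier
  · have := h3 (e j)
    rwa [e.symm_apply_apply] at this

/-! ### Smallness of the poset of finite subsets -/

theorem small_finsetSub {s : Set W} (hs : Small.{u} s) :
    Small.{u} {b : Finset W // ↑b ⊆ s} := by
  classical
  haveI := hs
  set f : {b : Finset W // ↑b ⊆ s} → Finset (Shrink.{u} s) :=
    fun b => b.1.attach.image fun x => equivShrink s ⟨x.1, b.2 x.2⟩ with hf
  have hmem : ∀ (b : {b : Finset W // ↑b ⊆ s}) (w : W),
      w ∈ b.1 ↔ ∃ y ∈ f b, ((((equivShrink s).symm y) : s) : W) = w := by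
    intro b w
    constructor
    · intro hw
      refine ⟨equivShrink s ⟨w, b.2 hw⟩, ?_, ?_⟩
      · rw [hf]
        simp only [Finset.mem_image, Finset.mem_attach]
        exact ⟨⟨w, hw⟩, ⟨trivial, rfl⟩⟩
      · rw [Equiv.symm_apply_apply]
    · rintro ⟨y, hy, rfl⟩
      rw [hf] at hy
      simp only [Finset.mem_image, Finset.mem_attach, true_and] at hy
      obtain ⟨x, rfl⟩ := hy
      rw [Equiv.symm_apply_apply]
      exact x.2
  have hinj : Function.Injective f := by
    intro b b' hbb
    refine Subtype.ext (Finset.ext fun w => ?_)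
    rw [hmem b w, hmem b' w, hbb]
  exact small_of_injective hinj

/-- Every element of a directed union of carriers of a finite set lies in one stage. -/
theorem finite_subset_stage {J : Type v} [Preorder J] (hdir : IsDirected J (· ≤ ·))
    (hne : Nonempty J) (C : J → Set W) (hmono : ∀ ⦃j j'⦄, j ≤ j' → C j ⊆ C j')
    {t : Set W} (ht : t.Finite) (htu : t ⊆ ⋃ j, C j) : ∃ j, t ⊆ C j := by
  haveI := hne
  haveI : IsDirected J (· ≤ ·) := hdir
  classical
  set g : W → J := fun w => if h : ∃ j, w ∈ C j then h.choose else hne.some with hg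
  have hgmem : ∀ w ∈ t, w ∈ C (g w) := by
    intro w hw
    have h : ∃ j, w ∈ C j := Set.mem_iUnion.1 (htu hw)
    rw [hg]
    simp only [dif_pos h]
    exact h.choose_spec
  obtain ⟨j₀, hj₀⟩ := Finset.exists_le (ht.toFinset.image g)
  refine ⟨j₀, fun w hw => ?_⟩
  have : g w ≤ j₀ := hj₀ _ (Finset.mem_image_of_mem g (ht.mem_toFinset.2 hw))
  exact hmono this (hgmem w hw)

/-! ### The expanded vocabulary -/

variable (A : AEC L W)

theorem lst_LS : LSTWitness L W A.K A.le A.LS := csInf_mem A.lst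

/-- A `Type u`-sized cardinal representing `LS(A)`. -/
def kk : Cardinal.{u} := (Cardinal.lt_univ.mp (lst_LS A).1).choose

theorem LS_eq : A.LS = Cardinal.lift.{u + 1} (kk A) :=
  (Cardinal.lt_univ.mp (lst_LS A).1).choose_spec

theorem aleph0_le_kk : ℵ₀ ≤ kk A := by
  have := (lst_LS A).2.2.1
  rw [LS_eq A, Cardinal.aleph0_le_lift] at this
  exact this

/-- The index type for the new function symbols. -/
def II : Type u := (kk A).out

theorem mk_II : #(II A) = kk A := mk_out _

instance : Nonempty (II A) := by
  rw [← Cardinal.mk_ne_zero_iff, mk_II]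
  intro h
  have h2 := aleph0_le_kk A
  rw [h] at h2
  exact absurd h2 (not_le.2 Cardinal.aleph0_pos)

/-- The expanded vocabulary: `L` plus `κ`-many function symbols of every arity. -/
def LL : FirstOrder.Language.{u, u} where
  Functions n := L.Functions n ⊕ II A
  Relations n := L.Relations n

/-- The inclusion of vocabularies `L →ᴸ L'`. -/
def phi : L →ᴸ LL A where
  onFunction := fun {n} f => Sum.inl f
  onRelation := fun {n} r => r

theorem phi_fun_inj (n : ℕ) :
    Function.Injective fun f : L.Functions n => (phi A).onFunction f :=
  fun _ _ h => Sum.inl.inj h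

theorem phi_rel_inj (n : ℕ) :
    Function.Injective fun r : L.Relations n => (phi A).onRelation r :=
  fun _ _ h => h

theorem card_LL :
    Cardinal.lift.{u + 1} (LL A).card = Cardinal.lift.{u + 1} L.card + A.LS := by
  have hRHS : Cardinal.lift.{u + 1} L.card + A.LS = A.LS :=
    Cardinal.add_eq_right (lst_LS A).2.2.1 (lst_LS A).2.1
  rw [hRHS]
  have h1 : (LL A).card = L.card + ℵ₀ * kk A := by
    show #((Σ n, L.Functions n ⊕ II A) ⊕ Σ n, L.Relations n) = _
    have e1 : ((Σ n, L.Functions n ⊕ II A) ⊕ Σ n, L.Relations n) ≃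
        (((Σ n, L.Functions n) ⊕ Σ _ : ℕ, II A) ⊕ Σ n, L.Relations n) :=
      Equiv.sumCongr (Equiv.sigmaSumDistrib _ _) (Equiv.refl _)
    rw [mk_congr e1]
    have e2 : #(((Σ n, L.Functions n) ⊕ Σ _ : ℕ, II A) ⊕ Σ n, L.Relations n) =
        (#(Σ n, L.Functions n) + #(Σ _ : ℕ, II A)) + #(Σ n, L.Relations n) := by
      rw [mk_sum, mk_sum]
      simp [Cardinal.lift_id]
    rw [e2]
    have e3 : #(Σ _ : ℕ, II A) = ℵ₀ * kk A := by
      rw [mk_congr (Equiv.sigmaEquivProd ℕ (II A)), Cardinal.mk_prod]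
      simp [Cardinal.mk_denumerable, mk_II, Cardinal.lift_id]
    rw [e3]
    have : L.card = #(Σ n, L.Functions n) + #(Σ n, L.Relations n) := rfl
    rw [this]
    ring
  rw [h1, Cardinal.lift_add]
  have h2 : Cardinal.lift.{u + 1} (ℵ₀ * kk A) = A.LS := by
    rw [Cardinal.lift_mul, Cardinal.lift_aleph0, ← LS_eq A]
    exact Cardinal.mul_eq_right (lst_LS A).2.2.1 (lst_LS A).2.2.1 Cardinal.aleph0_ne_zero
  rw [h2]
  rw [show Cardinal.lift.{u+1} L.card + A.LS = A.LS from hRHS]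

/-! ### Pieces of structures in the expanded vocabulary -/

/-- The `L`-structure with universe the `L'`-generated set of `s`, obtained by
restricting the reduct. -/
def piece (M : SetStruct (LL A) W) (s : Set W) (hs : s ⊆ M.carrier) : SetStruct L W where
  carrier := genSet M s
  small := by
    haveI := M.small
    exact small_subset (genSet_subset_carrier hs)
  fn := (SetStruct.reduct (phi A) M).fn
  rel := (SetStruct.reduct (phi A) M).rel
  fn_mem := fun n f x hx => genSet_closed n ((phi A).onFunction f) x hx

theorem piece_congr {M : SetStruct (LL A) W} {s t : Set W} (h : s = t)
    (hs : s ⊆ M.carrier) (ht : t ⊆ M.carrier) : piece A M s hs = piece A M t ht := by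
  subst h; rfl

/-- Membership in the universal class: all finitely generated pieces form a coherent
system of strong substructures. -/
def UK : Set (SetStruct (LL A) W) :=
  {M | ∀ (s t : Set W) (hst : s ⊆ t) (ht : t ⊆ M.carrier), s.Finite → t.Finite →
      A.le (piece A M s (hst.trans ht)) (piece A M t ht)}

section Pieces

variable {A}

/-- The directed poset of finite subsets of the carrier. -/
abbrev FinSub (c : Set W) : Type (u + 1) := {b : Finset W // ↑b ⊆ c}

theorem finSub_directed (c : Set W) : IsDirected (FinSub c) (· ≤ ·) := by
  classical
  constructor
  intro a b
  exact ⟨⟨a.1 ∪ b.1, by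
      rw [Finset.coe_union]
      exact Set.union_subset a.2 b.2⟩,
    Finset.subset_union_left, Finset.subset_union_right⟩

theorem finSub_nonempty (c : Set W) : Nonempty (FinSub c) :=
  ⟨⟨∅, by simp⟩⟩

theorem iUnion_genSet (M : SetStruct (LL A) W) :
    ⋃ b : FinSub M.carrier, genSet M (↑b.1 : Set W) = M.carrier := by
  apply Set.Subset.antisymm
  · exact Set.iUnion_subset fun b => genSet_subset_carrier b.2
  · intro w hw
    refine Set.mem_iUnion.2 ⟨⟨{w}, by simpa using hw⟩, ?_⟩
    exact subset_genSet (by simp)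

theorem UK_spec {M : SetStruct (LL A) W} (hM : M ∈ UK A) :
    SetStruct.reduct (phi A) M ∈ A.K ∧
      ∀ (s : Set W) (hs : s ⊆ M.carrier), s.Finite →
        A.le (piece A M s hs) (SetStruct.reduct (phi A) M) := by
  classical
  haveI : Small.{u} M.carrier := M.small
  haveI : Small.{u} (FinSub M.carrier) := small_finsetSub M.small
  obtain ⟨MU, hK, hcar, hup, hmin⟩ := chain' A (FinSub M.carrier)
    (finSub_directed _) (finSub_nonempty _)
    (fun b => piece A M ↑b.1 b.2)
    (fun b b' hb => hM ↑b.1 ↑b'.1 (Finset.coe_subset.2 hb) b'.2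
      b.1.finite_toSet b'.1.finite_toSet)
  have hcc : MU.carrier = M.carrier := by rw [hcar]; exact iUnion_genSet M
  -- agreement of `MU` with the reduct on tuples from the carrier
  have hagf : ∀ (n : ℕ) (f : L.Functions n) (x : Fin n → W), (∀ i, x i ∈ MU.carrier) →
      MU.fn n f x = (SetStruct.reduct (phi A) M).fn n f x := by
    intro n f x hx
    have hx' : ∀ i, ∃ b : FinSub M.carrier, x i ∈ genSet M ↑b.1 := by
      intro i
      have := hx i
      rw [hcar] at this
      exact Set.mem_iUnion.1 this
    choose b hb using hx'
    have hBsub : ↑(Finset.univ.sup fun i => (b i).1) ⊆ M.carrier := by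
      intro w hw
      rw [Finset.mem_coe, Finset.mem_sup] at hw
      obtain ⟨i, _, hi⟩ := hw
      exact (b i).2 hi
    have hxB : ∀ i, x i ∈ genSet M ↑(Finset.univ.sup fun i => (b i).1) := by
      intro i
      refine genSet_mono ?_ hBsub (hb i)
      intro w hw
      rw [Finset.mem_coe] at hw ⊢
      rw [Finset.mem_sup]
      exact ⟨i, Finset.mem_univ i, hw⟩
    exact ((A.le_sub (hup ⟨_, hBsub⟩)).2.1 n f x hxB).symm
  have hagr : ∀ (n : ℕ) (r : L.Relations n) (x : Fin n → W), (∀ i, x i ∈ MU.carrier) →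
      (MU.rel n r x ↔ (SetStruct.reduct (phi A) M).rel n r x) := by
    intro n r x hx
    have hx' : ∀ i, ∃ b : FinSub M.carrier, x i ∈ genSet M ↑b.1 := by
      intro i
      have := hx i
      rw [hcar] at this
      exact Set.mem_iUnion.1 this
    choose b hb using hx'
    have hBsub : ↑(Finset.univ.sup fun i => (b i).1) ⊆ M.carrier := by
      intro w hw
      rw [Finset.mem_coe, Finset.mem_sup] at hw
      obtain ⟨i, _, hi⟩ := hw
      exact (b i).2 hi
    have hxB : ∀ i, x i ∈ genSet M ↑(Finset.univ.sup fun i => (b i).1) := by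
      intro i
      refine genSet_mono ?_ hBsub (hb i)
      intro w hw
      rw [Finset.mem_coe] at hw ⊢
      rw [Finset.mem_sup]
      exact ⟨i, Finset.mem_univ i, hw⟩
    exact ((A.le_sub (hup ⟨_, hBsub⟩)).2.2 n r x hxB).symm
  let e : Emb MU (SetStruct.reduct (phi A) M) :=
    { toFun := fun x => ⟨↑x, show (x : W) ∈ M.carrier from hcc ▸ x.2⟩
      inj := by
        intro a b hab
        apply Subtype.ext
        have h2 := congrArg Subtype.val hab
        exact h2
      map_fn := fun n f x => hagf n f _ fun i => (x i).2
      map_rel := fun n r x => hagr n r _ fun i => (x i).2 }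
  have hsurj : Function.Surjective e.toFun := by
    rintro ⟨y, hy⟩
    exact ⟨⟨y, show y ∈ MU.carrier from hcc.symm ▸ hy⟩, rfl⟩
  refine ⟨A.iso_closed e hsurj hK, ?_⟩
  intro s hs hsf
  obtain ⟨b, rfl⟩ : ∃ b : Finset W, (↑b : Set W) = s := ⟨hsf.toFinset, hsf.coe_toFinset⟩
  refine le_transfer A (hup ⟨b, hs⟩) (Y := SetStruct.reduct (phi A) M)
    (show (SetStruct.reduct (phi A) M).carrier = MU.carrier from hcc.symm)
    (fun n f x hx => (hagf n f x hx).symm)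
    (fun n r x hx => (hagr n r x hx).symm)
    (X := piece A M ↑b hs) rfl (fun n f x => rfl) (fun n r x => Iff.rfl)

end Pieces

/-! ### Images of sets under embeddings -/

section ESet

variable {A}

/-- The image of a set of elements under an embedding. -/
def eSet {M N : SetStruct (LL A) W} (e : Emb M N) (s : Set W) : Set W :=
  (fun x : M.carrier => (e.toFun x : W)) '' (Subtype.val ⁻¹' s)

theorem mem_eSet {M N : SetStruct (LL A) W} {e : Emb M N} {s : Set W} {w : W} :
    w ∈ eSet e s ↔ ∃ x : M.carrier, (x : W) ∈ s ∧ (e.toFun x : W) = w := by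
  constructor
  · rintro ⟨x, hx, rfl⟩
    exact ⟨x, hx, rfl⟩
  · rintro ⟨x, hx, rfl⟩
    exact ⟨x, hx, rfl⟩

theorem eSet_mono {M N : SetStruct (LL A) W} (e : Emb M N) {s t : Set W} (hst : s ⊆ t) :
    eSet e s ⊆ eSet e t :=
  Set.image_mono (Set.preimage_mono hst)

theorem eSet_subset_carrier {M N : SetStruct (LL A) W} (e : Emb M N) (s : Set W) :
    eSet e s ⊆ N.carrier := by
  rintro w ⟨x, _, rfl⟩
  exact (e.toFun x).2

theorem eSet_finite {M N : SetStruct (LL A) W} (e : Emb M N) {s : Set W} (hs : s.Finite) :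
    (eSet e s).Finite :=
  (hs.preimage Subtype.val_injective.injOn).image _

/-- Embeddings map generated sets to generated sets. -/
theorem gen_image {M N : SetStruct (LL A) W} (e : Emb M N) {s : Set W}
    (hs : s ⊆ M.carrier) : genSet N (eSet e s) = eSet e (genSet M s) := by
  apply Set.Subset.antisymm
  · refine genSet_subset (eSet_mono e subset_genSet) (eSet_subset_carrier e _) ?_
    intro n f x hx
    choose y hy1 hy2 using fun i => mem_eSet.1 (hx i)
    have hfn : N.fn n f x = N.fn n f fun i => ↑(e.toFun (y i)) := by
      congr 1
      funext i
      exact (hy2 i).symm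
    rw [hfn, ← e.map_fn n f y]
    exact mem_eSet.2 ⟨⟨M.fn n f fun i => ↑(y i), M.fn_mem n f _ fun i => (y i).2⟩,
      genSet_closed n f _ fun i => hy1 i, rfl⟩
  · rintro w ⟨x, hx, rfl⟩
    -- pull back along `e`
    have hT : genSet M s ⊆
        Subtype.val '' ((fun z : M.carrier => (e.toFun z : W)) ⁻¹' genSet N (eSet e s)) := by
      refine genSet_subset ?_ ?_ ?_
      · intro w hw
        exact ⟨⟨w, hs hw⟩, subset_genSet (mem_eSet.2 ⟨⟨w, hs hw⟩, hw, rfl⟩), rfl⟩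
      · rintro w ⟨z, _, rfl⟩
        exact z.2
      · intro n f x' hx'
        choose y hy1 hy2 using hx'
        have hx'' : x' = fun i => ↑(y i) := by
          funext i
          exact (hy2 i).symm
        subst hx''
        refine ⟨⟨M.fn n f fun i => ↑(y i), M.fn_mem n f _ fun i => (y i).2⟩, ?_, rfl⟩
        rw [Set.mem_preimage]
        show (e.toFun ⟨M.fn n f fun i => ↑(y i),
          M.fn_mem n f _ fun i => (y i).2⟩ : W) ∈ genSet N (eSet e s)
        rw [e.map_fn n f y]
        exact genSet_closed n f _ fun i => hy1 i
    obtain ⟨z, hz, hzx⟩ := hT hx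
    have hzz : z = x := Subtype.ext hzx
    subst hzz
    exact hz

/-- Transport of the strong-substructure relation between pieces along an embedding. -/
theorem le_piece_map {M N : SetStruct (LL A) W} (e : Emb M N) {s t : Set W}
    (hst : s ⊆ t) (ht : t ⊆ M.carrier)
    (h : A.le (piece A M s (hst.trans ht)) (piece A M t ht)) :
    A.le (piece A N (eSet e s) (eSet_subset_carrier e s))
      (piece A N (eSet e t) (eSet_subset_carrier e t)) := by
  let e' : Emb (piece A M t ht) (piece A N (eSet e t) (eSet_subset_carrier e t)) :=
    { toFun := fun x => ⟨↑(e.toFun ⟨↑x, genSet_subset_carrier ht x.2⟩), by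
        show _ ∈ genSet N (eSet e t)
        rw [gen_image e ht]
        exact mem_eSet.2 ⟨⟨↑x, genSet_subset_carrier ht x.2⟩, x.2, rfl⟩⟩
      inj := by
        intro a b hab
        have h2 := congrArg Subtype.val hab
        have h3 := e.inj (Subtype.ext h2)
        have h4 := congrArg Subtype.val h3
        exact Subtype.ext h4
      map_fn := fun n f x =>
        e.map_fn n ((phi A).onFunction f) fun i => ⟨↑(x i), genSet_subset_carrier ht (x i).2⟩
      map_rel := fun n r x =>
        e.map_rel n ((phi A).onRelation r) fun i => ⟨↑(x i), genSet_subset_carrier ht (x i).2⟩ }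
  have hsurj : Function.Surjective e'.toFun := by
    rintro ⟨y, hy⟩
    rw [show (piece A N (eSet e t) (eSet_subset_carrier e t)).carrier = genSet N (eSet e t)
      from rfl, gen_image e ht] at hy
    obtain ⟨x, hx, hxy⟩ := mem_eSet.1 hy
    refine ⟨⟨↑x, hx⟩, Subtype.ext ?_⟩
    show (e.toFun ⟨↑x, _⟩ : W) = y
    have hxx : (⟨↑x, genSet_subset_carrier ht hx⟩ : M.carrier) = x := Subtype.ext rfl
    rw [hxx]
    exact hxy
  have h2 := A.le_iso e' hsurj h
  have key : (Emb.comp e' (Sub.emb (A.le_sub h))).imageStruct =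
      piece A N (eSet e s) (eSet_subset_carrier e s) := by
    refine SetStruct.ext' ?_ (fun n f x => rfl) (fun n r x => Iff.rfl)
    show Set.range _ = genSet N (eSet e s)
    rw [gen_image e (hst.trans ht)]
    ext w
    constructor
    · rintro ⟨x, rfl⟩
      exact mem_eSet.2 ⟨⟨↑x, genSet_subset_carrier (hst.trans ht) x.2⟩, x.2, rfl⟩
    · intro hw
      obtain ⟨x, hx, rfl⟩ := mem_eSet.1 hw
      exact ⟨⟨↑x, hx⟩, rfl⟩
  rwa [key] at h2

/-- Substructure relation between pieces over nested sets. -/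
theorem piece_sub {M : SetStruct (LL A) W} {s t : Set W} (hst : s ⊆ t) (ht : t ⊆ M.carrier) :
    Sub (piece A M s (hst.trans ht)) (piece A M t ht) :=
  ⟨genSet_mono hst ht, fun _ _ _ _ => rfl, fun _ _ _ _ => Iff.rfl⟩

/-- Pieces computed inside a substructure or the superstructure agree (upwards). -/
theorem le_piece_up {P Q : SetStruct (LL A) W} (hPQ : Sub P Q) {s t : Set W}
    (hst : s ⊆ t) (htP : t ⊆ P.carrier)
    (h : A.le (piece A P s (hst.trans htP)) (piece A P t htP)) :
    A.le (piece A Q s ((hst.trans htP).trans hPQ.1)) (piece A Q t (htP.trans hPQ.1)) := by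
  have gs : genSet P s = genSet Q s := gen_sub_eq hPQ (hst.trans htP)
  have gt : genSet P t = genSet Q t := gen_sub_eq hPQ htP
  refine le_transfer A h (Y := piece A Q t (htP.trans hPQ.1)) gt.symm
    (fun n f x hx => ?_) (fun n r x hx => ?_)
    (X := piece A Q s ((hst.trans htP).trans hPQ.1)) gs.symm
    (fun n f x => rfl) (fun n r x => Iff.rfl)
  · exact (hPQ.2.1 n ((phi A).onFunction f) x
      fun i => genSet_subset_carrier htP (hx i)).symm
  · exact (hPQ.2.2 n ((phi A).onRelation r) x
      fun i => genSet_subset_carrier htP (hx i)).symm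

/-- Pieces computed inside a substructure or the superstructure agree (downwards). -/
theorem le_piece_down {P Q : SetStruct (LL A) W} (hPQ : Sub P Q) {s t : Set W}
    (hst : s ⊆ t) (htP : t ⊆ P.carrier)
    (h : A.le (piece A Q s ((hst.trans htP).trans hPQ.1)) (piece A Q t (htP.trans hPQ.1))) :
    A.le (piece A P s (hst.trans htP)) (piece A P t htP) := by
  have gs : genSet P s = genSet Q s := gen_sub_eq hPQ (hst.trans htP)
  have gt : genSet P t = genSet Q t := gen_sub_eq hPQ htP
  refine le_transfer A h (Y := piece A P t htP) gt
    (fun n f x hx => ?_) (fun n r x hx => ?_)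
    (X := piece A P s (hst.trans htP)) gs
    (fun n f x => rfl) (fun n r x => Iff.rfl)
  · refine hPQ.2.1 n ((phi A).onFunction f) x fun i => ?_
    have := hx i
    rw [show (piece A Q t (htP.trans hPQ.1)).carrier = genSet Q t from rfl, ← gt] at this
    exact genSet_subset_carrier htP this
  · refine hPQ.2.2 n ((phi A).onRelation r) x fun i => ?_
    have := hx i
    rw [show (piece A Q t (htP.trans hPQ.1)).carrier = genSet Q t from rfl, ← gt] at this
    exact genSet_subset_carrier htP this

theorem eSet_preSet {M N : SetStruct (LL A) W} {e : Emb M N}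
    (hsurj : Function.Surjective e.toFun) {u : Set W} (hu : u ⊆ N.carrier) :
    eSet e (Subtype.val '' ((fun x : M.carrier => (e.toFun x : W)) ⁻¹' u)) = u := by
  ext w
  constructor
  · rintro ⟨x, hx, rfl⟩
    obtain ⟨z, hz, hzx⟩ := hx
    have : z = x := Subtype.ext hzx
    subst this
    exact hz
  · intro hw
    obtain ⟨x, hx⟩ := hsurj ⟨w, hu hw⟩
    refine mem_eSet.2 ⟨x, ⟨x, ?_, rfl⟩, by rw [hx]⟩
    show (e.toFun x : W) ∈ u
    rw [hx]
    exact hw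

end ESet

/-! ### The universal class -/

/-- The universal class associated to the AEC. -/
def UU : UniversalClass (LL A) W where
  K := UK A
  iso_closed := by
    intro M N e hsurj hM s t hst ht hsf htf
    set preS : Set W := Subtype.val '' ((fun x : M.carrier => (e.toFun x : W)) ⁻¹' s) with hpreS
    set preT : Set W := Subtype.val '' ((fun x : M.carrier => (e.toFun x : W)) ⁻¹' t) with hpreT
    have hmono : preS ⊆ preT := Set.image_mono (Set.preimage_mono hst)
    have hTM : preT ⊆ M.carrier := by
      rintro w ⟨z, _, rfl⟩
      exact z.2
    have hSfin : preS.Finite :=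
      ((hsf.preimage (Subtype.val_injective.comp e.inj).injOn).image _)
    have hTfin : preT.Finite :=
      ((htf.preimage (Subtype.val_injective.comp e.inj).injOn).image _)
    have h := hM preS preT hmono hTM hSfin hTfin
    have h2 := le_piece_map e hmono hTM h
    have keyS := piece_congr A (eSet_preSet hsurj (hst.trans ht)) (eSet_subset_carrier e preS)
      (hst.trans ht)
    have keyT := piece_congr A (eSet_preSet hsurj ht) (eSet_subset_carrier e preT) ht
    rwa [keyS, keyT] at h2
  sub_closed := by
    intro M N hMN hN s t hst ht hsf htf
    exact le_piece_down hMN hst ht (hN s t hst (ht.trans hMN.1) hsf htf)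
  union_closed := by
    intro P hdir hne D hDK hDsub MU hMUc hDMU s t hst ht hsf htf
    obtain ⟨j₀, hj₀⟩ := finite_subset_stage hdir hne (fun j => (D j).carrier)
      (fun j j' h => (hDsub h).1) htf (by rw [← hMUc]; exact ht)
    exact le_piece_up (hDMU j₀) hst hj₀ (hDK j₀ s t hst hj₀ hsf htf)

/-! ### The reduct functor -/

/-- The reduct of an embedding. -/
def reductEmb {M N : SetStruct (LL A) W} (e : Emb M N) :
    Emb (SetStruct.reduct (phi A) M) (SetStruct.reduct (phi A) N) where
  toFun := e.toFun
  inj := e.inj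
  map_fn := fun n f x => e.map_fn n ((phi A).onFunction f) x
  map_rel := fun n r x => e.map_rel n ((phi A).onRelation r) x

theorem le_image_reduct {M N : SetStruct (LL A) W} (hM : M ∈ UK A) (hN : N ∈ UK A)
    (e : Emb M N) :
    A.le (reductEmb A e).imageStruct (SetStruct.reduct (phi A) N) := by
  classical
  haveI : Small.{u} (FinSub M.carrier) := small_finsetSub M.small
  obtain ⟨MU, hK, hcar, hup, hmin⟩ := chain' A (FinSub M.carrier)
    (finSub_directed _) (finSub_nonempty _)
    (fun b => piece A N (eSet e ↑b.1) (eSet_subset_carrier e _))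
    (fun b b' hb => hN (eSet e ↑b.1) (eSet e ↑b'.1)
      (eSet_mono e (Finset.coe_subset.2 hb)) (eSet_subset_carrier e _)
      (eSet_finite e b.1.finite_toSet) (eSet_finite e b'.1.finite_toSet))
  have hMUc : MU.carrier = eSet e M.carrier := by
    rw [hcar]
    have h1 : ∀ b : FinSub M.carrier,
        genSet N (eSet e ↑b.1) = eSet e (genSet M ↑b.1) := fun b => gen_image e b.2
    calc ⋃ b : FinSub M.carrier, genSet N (eSet e ↑b.1)
        = ⋃ b : FinSub M.carrier, eSet e (genSet M ↑b.1) := Set.iUnion_congr h1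
      _ = eSet e M.carrier := by
          show (⋃ b : FinSub M.carrier,
            (fun x : M.carrier => (e.toFun x : W)) '' (Subtype.val ⁻¹' genSet M ↑b.1)) = _
          rw [← Set.image_iUnion, ← Set.preimage_iUnion, iUnion_genSet M]
          rfl
  have hle : A.le MU (SetStruct.reduct (phi A) N) :=
    hmin _ fun b => (UK_spec hN).2 _ (eSet_subset_carrier e _)
      (eSet_finite e b.1.finite_toSet)
  refine le_transfer A hle (Y := SetStruct.reduct (phi A) N) rfl
    (fun n f x _ => rfl) (fun n r x _ => Iff.rfl)
    (X := (reductEmb A e).imageStruct) ?_ (fun n f x => rfl) (fun n r x => Iff.rfl)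
  rw [hMUc]
  show Set.range _ = eSet e M.carrier
  ext w
  constructor
  · rintro ⟨x, rfl⟩
    exact mem_eSet.2 ⟨x, x.2, rfl⟩
  · intro hw
    obtain ⟨x, _, rfl⟩ := mem_eSet.1 hw
    exact ⟨x, rfl⟩

/-- The reduct functor from the universal class to the AEC. -/
def FF : UnivCat (UU A) ⥤ A.Cat where
  obj := fun M => ⟨SetStruct.reduct (phi A) M.1, (UK_spec M.2).1⟩
  map := fun {M N} e => ⟨reductEmb A e, le_image_reduct A M.2 N.2 e⟩
  map_id := fun M => Subtype.ext (Emb.ext' rfl)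
  map_comp := fun f g => Subtype.ext (Emb.ext' rfl)

theorem FF_faithful : (FF A).Faithful := by
  constructor
  intro M N e₁ e₂ h
  have h2 := congrArg (fun z : (FF A).obj M ⟶ (FF A).obj N => (aecHomEmb z).toFun) h
  exact Emb.ext' h2

/-! ### Surjectivity on objects: Skolem expansions -/

section Surj

variable (X : SetStruct L W) (hX : X ∈ A.K)

/-- The Skolem hull assignment: a monotone family of small strong substructures of `X`
indexed by finite subsets of `W`. -/
def Hfun (s : Finset W) : SetStruct L W :=
  letI := Classical.decEq W
  ((lst_LS A).2.2.2 X hX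
    ((↑s ∪ ⋃ s' ∈ s.ssubsets, (Hfun s').carrier) ∩ X.carrier)
    Set.inter_subset_right).choose
termination_by s.card
decreasing_by
  all_goals
    letI := Classical.decEq W
    exact Finset.card_lt_card (Finset.mem_ssubsets.mp (by assumption))

/-- The generating set fed to the LST axiom at stage `s`. -/
def HfunSet (s : Finset W) : Set W :=
  letI := Classical.decEq W
  (↑s ∪ ⋃ s' ∈ s.ssubsets, (Hfun A X hX s').carrier) ∩ X.carrier

theorem Hfun_spec (s : Finset W) :
    A.le (Hfun A X hX s) X ∧ HfunSet A X hX s ⊆ (Hfun A X hX s).carrier ∧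
      #(Hfun A X hX s).carrier ≤ #(HfunSet A X hX s) + A.LS := by
  have key : Hfun A X hX s =
      ((lst_LS A).2.2.2 X hX (HfunSet A X hX s) Set.inter_subset_right).choose := by
    rw [Hfun]
    rfl
  rw [key]
  exact ((lst_LS A).2.2.2 X hX (HfunSet A X hX s) Set.inter_subset_right).choose_spec

theorem Hfun_le (s : Finset W) : A.le (Hfun A X hX s) X := (Hfun_spec A X hX s).1

theorem Hfun_carrier_sub (s : Finset W) : (Hfun A X hX s).carrier ⊆ X.carrier :=
  (A.le_sub (Hfun_le A X hX s)).1

theorem Hfun_mem (s : Finset W) : Hfun A X hX s ∈ A.K :=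
  (A.le_mem (Hfun_le A X hX s)).1

theorem subset_Hfun (s : Finset W) : ↑s ∩ X.carrier ⊆ (Hfun A X hX s).carrier :=
  fun w hw => (Hfun_spec A X hX s).2.1 ⟨Or.inl hw.1, hw.2⟩

theorem Hfun_mono {s' s : Finset W} (h : s' ⊆ s) :
    (Hfun A X hX s').carrier ⊆ (Hfun A X hX s).carrier := by
  classical
  rcases eq_or_ne s' s with rfl | hne
  · exact le_refl _
  · intro w hw
    apply (Hfun_spec A X hX s).2.1
    refine ⟨Or.inr ?_, Hfun_carrier_sub A X hX s' hw⟩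
    refine Set.mem_biUnion ?_ hw
    show s' ∈ s.ssubsets
    rw [Finset.mem_ssubsets]
    exact Finset.ssubset_iff_subset_ne.2 ⟨h, hne⟩

theorem Hfun_le_of_subset {s' s : Finset W} (h : s' ⊆ s) :
    A.le (Hfun A X hX s') (Hfun A X hX s) := by
  have hsub : Sub (Hfun A X hX s') (Hfun A X hX s) := by
    refine ⟨Hfun_mono A X hX h, ?_, ?_⟩
    · intro n f x hx
      exact ((A.le_sub (Hfun_le A X hX s')).2.1 n f x hx).trans
        (((A.le_sub (Hfun_le A X hX s)).2.1 n f x fun i => Hfun_mono A X hX h (hx i)).symm)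
    · intro n r x hx
      exact ((A.le_sub (Hfun_le A X hX s')).2.2 n r x hx).trans
        (((A.le_sub (Hfun_le A X hX s)).2.2 n r x fun i => Hfun_mono A X hX h (hx i)).symm)
  exact A.coherence hsub (Hfun_le A X hX s) (Hfun_le A X hX s')

theorem biUnion_card_le (F : Finset (Finset W)) (C : Finset W → Set W)
    (hC : ∀ s ∈ F, #(C s) ≤ A.LS) : #(⋃ s ∈ F, C s) ≤ A.LS := by
  classical
  induction F using Finset.induction_on with
  | empty =>
    have : (⋃ s ∈ (∅ : Finset (Finset W)), C s) = ∅ := by simp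
    rw [this, Cardinal.mk_emptyCollection]
    exact zero_le
  | @insert a F ha ih =>
    rw [Finset.set_biUnion_insert]
    refine le_trans (Cardinal.mk_union_le _ _) ?_
    have h1 := hC a (Finset.mem_insert_self a F)
    have h2 := ih fun s hs => hC s (Finset.mem_insert_of_mem hs)
    calc #(C a) + #(⋃ s ∈ F, C s) ≤ A.LS + A.LS := add_le_add h1 h2
      _ = A.LS := Cardinal.add_eq_self (lst_LS A).2.2.1

theorem Hfun_card (s : Finset W) : #(Hfun A X hX s).carrier ≤ A.LS := by
  classical
  induction s using Finset.strongInduction with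
  | _ s ih =>
    refine le_trans (Hfun_spec A X hX s).2.2 ?_
    have h1 : #(HfunSet A X hX s) ≤ A.LS := by
      refine le_trans (Cardinal.mk_le_mk_of_subset Set.inter_subset_left) ?_
      refine le_trans (Cardinal.mk_union_le _ _) ?_
      have ha : #(↑s : Set W) ≤ A.LS :=
        le_trans (le_of_lt s.finite_toSet.lt_aleph0) (lst_LS A).2.2.1
      have hb : #(⋃ s' ∈ s.ssubsets, (Hfun A X hX s').carrier) ≤ A.LS :=
        biUnion_card_le A _ _ fun s' hs' => ih s' (Finset.mem_ssubsets.1 hs')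
      calc #(↑s : Set W) + #(⋃ s' ∈ s.ssubsets, (Hfun A X hX s').carrier)
          ≤ A.LS + A.LS := add_le_add ha hb
        _ = A.LS := Cardinal.add_eq_self (lst_LS A).2.2.1
    calc #(HfunSet A X hX s) + A.LS ≤ A.LS + A.LS := add_le_add h1 (le_refl _)
      _ = A.LS := Cardinal.add_eq_self (lst_LS A).2.2.1

/-- The finset of values of a tuple. -/
def tupF {n : ℕ} (x : Fin n → W) : Finset W :=
  letI := Classical.decEq W
  Finset.image x Finset.univ

theorem mem_tupF {n : ℕ} {x : Fin n → W} {w : W} : w ∈ tupF x ↔ ∃ k, x k = w := by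
  unfold tupF
  simp [Finset.mem_image]

variable (hne : ∀ M ∈ A.K, M.carrier.Nonempty)

include hne

theorem exists_enum (s : Finset W) :
    ∃ g : II A → W, (∀ i, g i ∈ (Hfun A X hX s).carrier) ∧
      ∀ w ∈ (Hfun A X hX s).carrier, ∃ i, g i = w := by
  have hcard : #(Hfun A X hX s).carrier ≤ #(ULift.{u + 1} (II A)) := by
    rw [mk_uLift, mk_II, ← LS_eq]
    exact Hfun_card A X hX s
  obtain ⟨f⟩ := (Cardinal.le_def _ _).1 hcard
  haveI : Nonempty (Hfun A X hX s).carrier := (hne _ (Hfun_mem A X hX s)).to_subtype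
  have hg0 : Function.Surjective (Function.invFun f) := Function.invFun_surjective f.injective
  refine ⟨fun i => ↑(Function.invFun f ⟨i⟩), fun i => (Function.invFun f ⟨i⟩).2, ?_⟩
  intro w hw
  obtain ⟨i, hi⟩ := hg0 ⟨w, hw⟩
  refine ⟨i.down, ?_⟩
  show ((Function.invFun f ⟨i.down⟩ : (Hfun A X hX s).carrier) : W) = w
  have h2 : Function.invFun f ⟨i.down⟩ = (⟨w, hw⟩ : (Hfun A X hX s).carrier) := hi
  rw [h2]

/-- The enumeration of the Skolem hull of `s` by the new function symbols. -/
def gEnum (s : Finset W) : II A → W := (exists_enum A X hX hne s).choose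

theorem gEnum_mem (s : Finset W) (i : II A) :
    gEnum A X hX hne s i ∈ (Hfun A X hX s).carrier :=
  (exists_enum A X hX hne s).choose_spec.1 i

theorem gEnum_surj (s : Finset W) : ∀ w ∈ (Hfun A X hX s).carrier,
    ∃ i, gEnum A X hX hne s i = w :=
  (exists_enum A X hX hne s).choose_spec.2

/-- The Skolem function interpretation. -/
def skFn (n : ℕ) (i : II A) (x : Fin n → W) : W :=
  letI : Decidable (∀ k, x k ∈ X.carrier) := Classical.dec _
  if ∀ k, x k ∈ X.carrier then gEnum A X hX hne (tupF x) i else (hne X hX).some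

theorem skFn_pos {n : ℕ} (i : II A) (x : Fin n → W) (hx : ∀ k, x k ∈ X.carrier) :
    skFn A X hX hne n i x = gEnum A X hX hne (tupF x) i := by
  unfold skFn
  exact if_pos hx

/-- The Skolem expansion of `X` to an `L'`-structure. -/
def MX : SetStruct (LL A) W where
  carrier := X.carrier
  small := X.small
  fn := fun n f x =>
    match f with
    | Sum.inl f => X.fn n f x
    | Sum.inr i => skFn A X hX hne n i x
  rel := fun n r x => X.rel n r x
  fn_mem := by
    intro n f x hx
    rcases f with f | i
    · exact X.fn_mem n f x hx
    · show skFn A X hX hne n i x ∈ X.carrier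
      rw [skFn_pos A X hX hne i x hx]
      exact Hfun_carrier_sub A X hX _ (gEnum_mem A X hX hne (tupF x) i)

theorem MX_reduct : SetStruct.reduct (phi A) (MX A X hX hne) = X :=
  SetStruct.ext' rfl (fun n f x => rfl) (fun n r x => Iff.rfl)

theorem MX_fn_inr {n : ℕ} (i : II A) (x : Fin n → W) (hx : ∀ k, x k ∈ X.carrier) :
    (MX A X hX hne).fn n (Sum.inr i) x = gEnum A X hX hne (tupF x) i := by
  show skFn A X hX hne n i x = _
  exact skFn_pos A X hX hne i x hx

theorem MX_le_piece (s : Set W) (hs : s ⊆ (MX A X hX hne).carrier) (hsf : s.Finite) :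
    A.le (piece A (MX A X hX hne) s hs) X := by
  classical
  set M := MX A X hX hne with hM
  have hsX : s ⊆ X.carrier := hs
  haveI : Small.{u} (genSet M s : Set W) := by
    haveI := M.small
    exact small_subset (genSet_subset_carrier (N := M) hs)
  haveI : Small.{u} (FinSub (genSet M s)) := small_finsetSub this
  obtain ⟨MU, hK, hcar, hup, hmin⟩ := chain' A (FinSub (genSet M s))
    (finSub_directed _) (finSub_nonempty _)
    (fun b => Hfun A X hX b.1)
    (fun b b' hb => Hfun_le_of_subset A X hX hb)
  -- the union of the hulls is exactly the generated set
  have claim1 : ∀ b : FinSub (genSet M s), (Hfun A X hX b.1).carrier ⊆ genSet M s := by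
    intro b w hw
    obtain ⟨i, hi⟩ := gEnum_surj A X hX hne b.1 w hw
    have hxg : ∀ k : Fin b.1.card, (↑(b.1.equivFin.symm k) : W) ∈ genSet M s := fun k =>
      b.2 (b.1.equivFin.symm k).2
    have hxc : ∀ k : Fin b.1.card, (↑(b.1.equivFin.symm k) : W) ∈ X.carrier := fun k =>
      genSet_subset_carrier (N := M) hs (hxg k)
    have htup : tupF (fun k : Fin b.1.card => (↑(b.1.equivFin.symm k) : W)) = b.1 := by
      ext w'
      rw [mem_tupF]
      constructor
      · rintro ⟨k, rfl⟩
        exact (b.1.equivFin.symm k).2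
      · intro hw'
        exact ⟨b.1.equivFin ⟨w', hw'⟩, by rw [Equiv.symm_apply_apply]⟩
    have hcl := genSet_closed (N := M) (s := s) b.1.card (Sum.inr i) _ hxg
    rw [MX_fn_inr A X hX hne i _ hxc, htup, hi] at hcl
    exact hcl
  have claim2 : genSet M s ⊆ ⋃ b : FinSub (genSet M s), (Hfun A X hX b.1).carrier := by
    refine genSet_subset ?_ ?_ ?_
    · intro w hw
      refine Set.mem_iUnion.2 ⟨⟨{w}, by simpa using subset_genSet hw⟩, ?_⟩
      exact subset_Hfun A X hX {w} ⟨by simp, hsX hw⟩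
    · exact Set.iUnion_subset fun b => Hfun_carrier_sub A X hX b.1
    · intro n f x hx
      choose b hb using fun i => Set.mem_iUnion.1 (hx i)
      have hBsub : ∀ i, (b i).1 ⊆ Finset.univ.sup fun i => (b i).1 := by
        intro i w hw
        rw [Finset.mem_sup]
        exact ⟨i, Finset.mem_univ i, hw⟩
      have hBgen : ↑(Finset.univ.sup fun i => (b i).1) ⊆ genSet M s := by
        intro w hw
        rw [Finset.mem_coe, Finset.mem_sup] at hw
        obtain ⟨i, _, hi⟩ := hw
        exact (b i).2 hi
      have hxB : ∀ i, x i ∈ (Hfun A X hX (Finset.univ.sup fun i => (b i).1)).carrier :=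
        fun i => Hfun_mono A X hX (hBsub i) (hb i)
      have hxc : ∀ i, x i ∈ X.carrier := fun i => Hfun_carrier_sub A X hX _ (hxB i)
      rcases f with f | i
      · refine Set.mem_iUnion.2 ⟨⟨_, hBgen⟩, ?_⟩
        show X.fn n f x ∈ _
        rw [← (A.le_sub (Hfun_le A X hX (Finset.univ.sup fun i => (b i).1))).2.1 n f x hxB]
        exact (Hfun A X hX _).fn_mem n f x hxB
      · rw [show M.fn n (Sum.inr i) x = gEnum A X hX hne (tupF x) i from
          MX_fn_inr A X hX hne i x hxc]
        have htsub : ↑(tupF x) ⊆ genSet M s := by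
          intro w hw
          rw [Finset.mem_coe, mem_tupF] at hw
          obtain ⟨k, rfl⟩ := hw
          -- x k lies in the union, which is contained in genSet M s by claim1
          exact claim1 (b k) (hb k)
        exact Set.mem_iUnion.2 ⟨⟨tupF x, htsub⟩, gEnum_mem A X hX hne (tupF x) i⟩
  have hgen : genSet M s = MU.carrier := by
    rw [hcar]
    exact Set.Subset.antisymm claim2 (Set.iUnion_subset claim1)
  have hle : A.le MU X := hmin X fun b => Hfun_le A X hX b.1
  exact le_transfer A hle (Y := X) rfl (fun n f x _ => rfl) (fun n r x _ => Iff.rfl)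
    (X := piece A M s hs) hgen (fun n f x => rfl) (fun n r x => Iff.rfl)

theorem MX_mem : MX A X hX hne ∈ UK A := by
  intro s t hst ht hsf htf
  exact A.coherence (piece_sub hst ht) (MX_le_piece A X hX hne t ht htf)
    (MX_le_piece A X hX hne s (hst.trans ht) hsf)

end Surj

theorem FF_surj (hne : ∀ M ∈ A.K, M.carrier.Nonempty) (Xc : A.Cat) :
    ∃ M' : UnivCat (UU A), (FF A).obj M' = Xc := by
  obtain ⟨X, hX⟩ := Xc
  exact ⟨⟨MX A X hX hne, MX_mem A X hX hne⟩, Subtype.ext (MX_reduct A X hX hne)⟩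

/-! ### Preservation of directed colimits -/

section Colim

variable {A}
variable {J : Type u} [Preorder J]
variable (D : J ⥤ UnivCat (UU A)) (c : Cocone D)

/-- The union of the images of the cocone maps. -/
def VV : Set W :=
  ⋃ j, Set.range fun x : ((D.obj j).1.carrier) => ((univHomEmb (c.ι.app j)).toFun x : W)

theorem mem_VV {w : W} : w ∈ VV D c ↔
    ∃ (j : J) (y : (D.obj j).1.carrier), ((univHomEmb (c.ι.app j)).toFun y : W) = w := by
  constructor
  · intro hw
    obtain ⟨S, ⟨j, rfl⟩, hS⟩ := hw
    obtain ⟨y, hy⟩ := hS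
    exact ⟨j, y, hy⟩
  · rintro ⟨j, y, rfl⟩
    exact Set.mem_iUnion.2 ⟨j, ⟨y, rfl⟩⟩

theorem VV_sub : VV D c ⊆ c.pt.1.carrier := by
  intro w hw
  obtain ⟨j, y, rfl⟩ := (mem_VV D c).1 hw
  exact ((univHomEmb (c.ι.app j)).toFun y).2

theorem cocone_w {j j' : J} (h : j ≤ j') (y : (D.obj j).1.carrier) :
    ((univHomEmb (c.ι.app j')).toFun ((univHomEmb (D.map (homOfLE h))).toFun y) : W) =
      ((univHomEmb (c.ι.app j)).toFun y : W) := by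
  have hw := c.w (homOfLE h)
  have h2 := congrArg (fun z : D.obj j ⟶ c.pt => (univHomEmb z).toFun y) hw
  exact congrArg Subtype.val h2

theorem tuple_stage (hdir : IsDirected J (· ≤ ·)) (hJne : Nonempty J) {n : ℕ}
    (x : Fin n → W) (hx : ∀ i, x i ∈ VV D c) :
    ∃ (j₀ : J) (y : Fin n → ((D.obj j₀).1.carrier)),
      ∀ i, ((univHomEmb (c.ι.app j₀)).toFun (y i) : W) = x i := by
  classical
  haveI := hJne
  haveI : IsDirected J (· ≤ ·) := hdir
  choose j y hy using fun i => (mem_VV D c).1 (hx i)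
  obtain ⟨j₀, hj₀⟩ := Finset.exists_le (Finset.image j Finset.univ)
  have hle : ∀ i, j i ≤ j₀ := fun i => hj₀ _ (Finset.mem_image_of_mem j (Finset.mem_univ i))
  refine ⟨j₀, fun i => (univHomEmb (D.map (homOfLE (hle i)))).toFun (y i), fun i => ?_⟩
  rw [cocone_w D c (hle i) (y i)]
  exact hy i

/-- The union substructure of the colimit. -/
def VS (hdir : IsDirected J (· ≤ ·)) (hJne : Nonempty J) : SetStruct (LL A) W where
  carrier := VV D c
  small := by
    haveI := c.pt.1.small
    exact small_subset (VV_sub D c)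
  fn := c.pt.1.fn
  rel := c.pt.1.rel
  fn_mem := by
    intro n f x hx
    obtain ⟨j₀, y, hy⟩ := tuple_stage D c hdir hJne x hx
    have h1 : ((univHomEmb (c.ι.app j₀)).toFun
        ⟨(D.obj j₀).1.fn n f fun i => ↑(y i),
          (D.obj j₀).1.fn_mem n f _ fun i => (y i).2⟩ : W) =
        c.pt.1.fn n f fun i => ((univHomEmb (c.ι.app j₀)).toFun (y i) : W) :=
      (univHomEmb (c.ι.app j₀)).map_fn n f y
    have h2 : c.pt.1.fn n f x =
        c.pt.1.fn n f fun i => ((univHomEmb (c.ι.app j₀)).toFun (y i) : W) := by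
      congr 1
      funext i
      exact (hy i).symm
    rw [h2, ← h1]
    exact (mem_VV D c).2 ⟨j₀, _, rfl⟩

theorem VS_mem (hdir : IsDirected J (· ≤ ·)) (hJne : Nonempty J) :
    VS D c hdir hJne ∈ UK A :=
  (UU A).sub_closed ⟨VV_sub D c, fun _ _ _ _ => rfl, fun _ _ _ _ => Iff.rfl⟩ c.pt.2

/-- The corestricted cocone onto the union substructure. -/
def cpr (hdir : IsDirected J (· ≤ ·)) (hJne : Nonempty J) : Cocone D where
  pt := ⟨VS D c hdir hJne, VS_mem D c hdir hJne⟩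
  ι :=
    { app := fun j =>
        { toFun := fun y => ⟨((univHomEmb (c.ι.app j)).toFun y : W),
            (mem_VV D c).2 ⟨j, y, rfl⟩⟩
          inj := by
            intro a b hab
            have h2 := congrArg Subtype.val hab
            exact (univHomEmb (c.ι.app j)).inj (Subtype.ext h2)
          map_fn := fun n f x => (univHomEmb (c.ι.app j)).map_fn n f x
          map_rel := fun n r x => (univHomEmb (c.ι.app j)).map_rel n r x }
      naturality := by
        intro j j' f
        apply Emb.ext'
        funext y
        apply Subtype.ext
        show ((univHomEmb (c.ι.app j')).toFun ((univHomEmb (D.map f)).toFun y) : W) = _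
        have hw := c.w f
        have h2 := congrArg (fun z : D.obj j ⟶ c.pt => (univHomEmb z).toFun y) hw
        exact congrArg Subtype.val h2 }

theorem cover (hdir : IsDirected J (· ≤ ·)) (hJne : Nonempty J) (hc : IsColimit c)
    (x : c.pt.1.carrier) : (x : W) ∈ VV D c := by
  let t : c.pt ⟶ (cpr D c hdir hJne).pt := hc.desc (cpr D c hdir hJne)
  let incl : (cpr D c hdir hJne).pt ⟶ c.pt :=
    (Sub.emb ⟨VV_sub D c, fun _ _ _ _ => rfl, fun _ _ _ _ => Iff.rfl⟩ :
      Emb (VS D c hdir hJne) c.pt.1)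
  have hcomp : t ≫ incl = 𝟙 c.pt := by
    apply hc.hom_ext
    intro j
    have h1 : c.ι.app j ≫ t ≫ incl = (c.ι.app j ≫ t) ≫ incl := (Category.assoc _ _ _).symm
    have h2 : c.ι.app j ≫ t = (cpr D c hdir hJne).ι.app j := hc.fac _ j
    have h3 : c.ι.app j ≫ 𝟙 c.pt = c.ι.app j := Category.comp_id _
    rw [h1, h2, h3]
    apply Emb.ext'
    funext y
    rfl
  have h5 : (((univHomEmb (t ≫ incl)).toFun x : c.pt.1.carrier) : W) =
      ((univHomEmb (𝟙 c.pt)).toFun x : W) := by rw [hcomp]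
  have h6 : ((t.toFun x : (VS D c hdir hJne).carrier) : W) = (x : W) := h5
  rw [← h6]
  exact (t.toFun x).2

section Desc

variable (s : Cocone (D ⋙ FF A))

/-- The cocone legs on the AEC side, as plain functions. -/
def sFun (j : J) : ((D.obj j).1.carrier) → (s.pt.1.carrier) :=
  fun y => (aecHomEmb (s.ι.app j)).toFun y

theorem sFun_w {j j' : J} (h : j ≤ j') (y : (D.obj j).1.carrier) :
    sFun D s j' ((univHomEmb (D.map (homOfLE h))).toFun y) = sFun D s j y := by
  have hw := s.w (homOfLE h)
  exact congrArg (fun z : (D ⋙ FF A).obj j ⟶ s.pt => (aecHomEmb z).toFun y) hw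

theorem sFun_wd (hdir : IsDirected J (· ≤ ·)) {j k : J} (y : (D.obj j).1.carrier)
    (z : (D.obj k).1.carrier)
    (h : ((univHomEmb (c.ι.app j)).toFun y : W) = ((univHomEmb (c.ι.app k)).toFun z : W)) :
    sFun D s j y = sFun D s k z := by
  obtain ⟨l, hjl, hkl⟩ := hdir.directed j k
  have h1 : (univHomEmb (c.ι.app l)).toFun ((univHomEmb (D.map (homOfLE hjl))).toFun y) =
      (univHomEmb (c.ι.app l)).toFun ((univHomEmb (D.map (homOfLE hkl))).toFun z) := by
    apply Subtype.ext
    rw [cocone_w D c hjl y, cocone_w D c hkl z, h]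
  have h2 := (univHomEmb (c.ι.app l)).inj h1
  rw [← sFun_w D s hjl y, ← sFun_w D s hkl z, h2]

variable (hdir : IsDirected J (· ≤ ·)) (hJne : Nonempty J) (hc : IsColimit c)

/-- The stage of an element of the colimit. -/
def pickJ (x : c.pt.1.carrier) : J :=
  ((mem_VV D c).1 (cover D c hdir hJne hc x)).choose

/-- The representative of an element of the colimit at its stage. -/
def pickY (x : c.pt.1.carrier) : ((D.obj (pickJ D c hdir hJne hc x)).1.carrier) :=
  ((mem_VV D c).1 (cover D c hdir hJne hc x)).choose_spec.choose

theorem pick_spec (x : c.pt.1.carrier) :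
    ((univHomEmb (c.ι.app (pickJ D c hdir hJne hc x))).toFun
      (pickY D c hdir hJne hc x) : W) = (x : W) :=
  ((mem_VV D c).1 (cover D c hdir hJne hc x)).choose_spec.choose_spec

/-- The underlying function of the descent morphism. -/
def descFun (x : c.pt.1.carrier) : (s.pt.1.carrier) :=
  sFun D s (pickJ D c hdir hJne hc x) (pickY D c hdir hJne hc x)

theorem descFun_spec {j : J} {y : (D.obj j).1.carrier} {x : c.pt.1.carrier}
    (h : ((univHomEmb (c.ι.app j)).toFun y : W) = (x : W)) :
    descFun D c s hdir hJne hc x = sFun D s j y :=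
  sFun_wd D c s hdir _ y ((pick_spec D c hdir hJne hc x).trans h.symm)

/-- The descent embedding. -/
def descEmb : Emb (((FF A).obj c.pt).1) s.pt.1 where
  toFun := descFun D c s hdir hJne hc
  inj := by
    intro a b hab
    obtain ⟨l, hal, hbl⟩ := hdir.directed (pickJ D c hdir hJne hc a) (pickJ D c hdir hJne hc b)
    have h1 : sFun D s l ((univHomEmb (D.map (homOfLE hal))).toFun (pickY D c hdir hJne hc a)) =
        sFun D s l ((univHomEmb (D.map (homOfLE hbl))).toFun (pickY D c hdir hJne hc b)) := by
      rw [sFun_w D s hal, sFun_w D s hbl]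
      exact hab
    have h2 := (aecHomEmb (s.ι.app l)).inj h1
    have h3 : ((univHomEmb (c.ι.app l)).toFun
          ((univHomEmb (D.map (homOfLE hal))).toFun (pickY D c hdir hJne hc a)) : W) =
        ((univHomEmb (c.ι.app l)).toFun
          ((univHomEmb (D.map (homOfLE hbl))).toFun (pickY D c hdir hJne hc b)) : W) := by
      have h4 := congrArg (fun z => ((univHomEmb (c.ι.app l)).toFun z : W)) h2
      exact h4
    rw [cocone_w D c hal, cocone_w D c hbl, pick_spec D c hdir hJne hc a,
      pick_spec D c hdir hJne hc b] at h3
    exact Subtype.ext h3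
  map_fn := by
    intro n f x
    obtain ⟨j₀, y, hy⟩ := tuple_stage D c hdir hJne (fun i => ↑(x i))
      (fun i => cover D c hdir hJne hc (x i))
    have hfn : ((((FF A).obj c.pt).1).fn n f fun i => ↑(x i)) =
        ((univHomEmb (c.ι.app j₀)).toFun
          ⟨((SetStruct.reduct (phi A) (D.obj j₀).1).fn n f fun i => ↑(y i)),
            (SetStruct.reduct (phi A) (D.obj j₀).1).fn_mem n f _ fun i => (y i).2⟩ : W) := by
      have h1 := (univHomEmb (c.ι.app j₀)).map_fn n ((phi A).onFunction f) y
      rw [show ((univHomEmb (c.ι.app j₀)).toFun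
          ⟨((SetStruct.reduct (phi A) (D.obj j₀).1).fn n f fun i => ↑(y i)),
            (SetStruct.reduct (phi A) (D.obj j₀).1).fn_mem n f _ fun i => (y i).2⟩ : W) =
          c.pt.1.fn n ((phi A).onFunction f)
            (fun i => ((univHomEmb (c.ι.app j₀)).toFun (y i) : W)) from h1]
      show c.pt.1.fn n ((phi A).onFunction f) (fun i => ↑(x i)) = _
      congr 1
      funext i
      exact (hy i).symm
    calc (descFun D c s hdir hJne hc
          ⟨(((FF A).obj c.pt).1).fn n f fun i => ↑(x i),
            (((FF A).obj c.pt).1).fn_mem n f _ fun i => (x i).2⟩ : W)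
        = (sFun D s j₀ ⟨((SetStruct.reduct (phi A) (D.obj j₀).1).fn n f fun i => ↑(y i)),
            (SetStruct.reduct (phi A) (D.obj j₀).1).fn_mem n f _ fun i => (y i).2⟩ : W) := by
          rw [descFun_spec D c s hdir hJne hc hfn.symm]
      _ = s.pt.1.fn n f fun i => (sFun D s j₀ (y i) : W) :=
          (aecHomEmb (s.ι.app j₀)).map_fn n f y
      _ = s.pt.1.fn n f fun i => (descFun D c s hdir hJne hc (x i) : W) := by
          congr 1
          funext i
          rw [descFun_spec D c s hdir hJne hc (hy i)]
  map_rel := by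
    intro n r x
    obtain ⟨j₀, y, hy⟩ := tuple_stage D c hdir hJne (fun i => ↑(x i))
      (fun i => cover D c hdir hJne hc (x i))
    have h1 := (univHomEmb (c.ι.app j₀)).map_rel n ((phi A).onRelation r) y
    have h2 := (aecHomEmb (s.ι.app j₀)).map_rel n r y
    have h3 : ((((FF A).obj c.pt).1).rel n r fun i => ↑(x i)) ↔
        (c.pt.1.rel n ((phi A).onRelation r)
          fun i => ((univHomEmb (c.ι.app j₀)).toFun (y i) : W)) := by
      show (c.pt.1.rel n ((phi A).onRelation r) fun i => ↑(x i)) ↔ _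
      constructor
      · intro h
        have : (fun i => ((univHomEmb (c.ι.app j₀)).toFun (y i) : W)) = fun i => ↑(x i) := by
          funext i; exact hy i
        rw [this]
        exact h
      · intro h
        have : (fun i => ((univHomEmb (c.ι.app j₀)).toFun (y i) : W)) = fun i => ↑(x i) := by
          funext i; exact hy i
        rw [this] at h
        exact h
    have h4 : (fun i => (descFun D c s hdir hJne hc (x i) : W)) =
        fun i => (sFun D s j₀ (y i) : W) := by
      funext i
      rw [descFun_spec D c s hdir hJne hc (hy i)]
    rw [h4]
    exact (h3.trans h1.symm).trans h2

theorem descEmb_le :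
    A.le (descEmb D c s hdir hJne hc).imageStruct s.pt.1 := by
  obtain ⟨MU, hK, hcar, hup, hmin⟩ := chain' A J hdir hJne
    (fun j => (aecHomEmb (s.ι.app j)).imageStruct)
    (fun j j' hj => by
      have hsub : Sub (aecHomEmb (s.ι.app j)).imageStruct
          (aecHomEmb (s.ι.app j')).imageStruct := by
        refine ⟨?_, fun _ _ _ _ => rfl, fun _ _ _ _ => Iff.rfl⟩
        rintro w ⟨y, rfl⟩
        refine ⟨(univHomEmb (D.map (homOfLE hj))).toFun y, ?_⟩
        show (sFun D s j' _ : W) = (sFun D s j y : W)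
        rw [sFun_w D s hj y]
      exact A.coherence hsub (s.ι.app j').2 (s.ι.app j).2)
  have hMUc : MU.carrier = (descEmb D c s hdir hJne hc).imageStruct.carrier := by
    rw [hcar]
    ext w
    constructor
    · intro hw
      obtain ⟨S, ⟨j, rfl⟩, hS⟩ := hw
      obtain ⟨y, rfl⟩ := hS
      refine ⟨(univHomEmb (c.ι.app j)).toFun y, ?_⟩
      show (descFun D c s hdir hJne hc _ : W) = _
      rw [descFun_spec D c s hdir hJne hc (x := (univHomEmb (c.ι.app j)).toFun y) rfl]
      rfl
    · rintro ⟨x, rfl⟩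
      refine Set.mem_iUnion.2 ⟨pickJ D c hdir hJne hc x, ?_⟩
      exact ⟨pickY D c hdir hJne hc x, rfl⟩
  have hle : A.le MU s.pt.1 := hmin _ fun j => (s.ι.app j).2
  exact le_transfer A hle (Y := s.pt.1) rfl (fun n f x _ => rfl) (fun n r x _ => Iff.rfl)
    (X := (descEmb D c s hdir hJne hc).imageStruct) hMUc.symm
    (fun n f x => rfl) (fun n r x => Iff.rfl)

/-- The descent morphism in the AEC category. -/
def descHom : (FF A).obj c.pt ⟶ s.pt :=
  ⟨descEmb D c s hdir hJne hc, descEmb_le D c s hdir hJne hc⟩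

end Desc

/-- The image cocone is a colimit. -/
noncomputable def mapIsColimit (hdir : IsDirected J (· ≤ ·)) (hJne : Nonempty J)
    (hc : IsColimit c) : IsColimit ((FF A).mapCocone c) where
  desc := fun s => descHom D c s hdir hJne hc
  fac := by
    intro s j
    apply Subtype.ext
    apply Emb.ext'
    funext y
    show descFun D c s hdir hJne hc ((univHomEmb (c.ι.app j)).toFun y) = sFun D s j y
    exact descFun_spec D c s hdir hJne hc (x := (univHomEmb (c.ι.app j)).toFun y) rfl
  uniq := by
    intro s m hm
    apply Subtype.ext
    apply Emb.ext'
    funext x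
    have hxe : (reductEmb A (c.ι.app (pickJ D c hdir hJne hc x))).toFun
        (pickY D c hdir hJne hc x) = x := Subtype.ext (pick_spec D c hdir hJne hc x)
    have h2 : (aecHomEmb (((FF A).mapCocone c).ι.app (pickJ D c hdir hJne hc x) ≫ m)).toFun
          (pickY D c hdir hJne hc x) =
        (aecHomEmb (s.ι.app (pickJ D c hdir hJne hc x))).toFun (pickY D c hdir hJne hc x) := by
      rw [hm (pickJ D c hdir hJne hc x)]
    show (aecHomEmb m).toFun x = descFun D c s hdir hJne hc x
    rw [← hxe]
    exact h2.trans (descFun_spec D c s hdir hJne hc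
      (x := (reductEmb A (c.ι.app (pickJ D c hdir hJne hc x))).toFun
        (pickY D c hdir hJne hc x)) rfl).symm

end Colim

theorem FF_preserves : PreservesDirectedColimits.{u} (FF A) := by
  intro J _ hdir hJne
  constructor
  intro D
  constructor
  intro c hc
  exact ⟨mapIsColimit D c hdir hJne hc⟩

end S6

/-- (Shelah's presentation theorem, universal form.)  For every AEC
`A` (in the vocabulary `L`) not containing the empty structure there is an expanded
vocabulary `L'` with `|L'| = |L| + LS(A)` and a universal class `K'` in `L'` such
that the reduct map is a faithful functor from `K'` to `A` preserving directed
colimits and surjective on objects. -/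
theorem statement_6 (L : FirstOrder.Language.{u, u}) (W : Type (u + 1)) (A : AEC L W)
    (hne : ∀ M ∈ A.K, M.carrier.Nonempty) :
    ∃ (L' : FirstOrder.Language.{u, u}) (φ : L →ᴸ L'),
      (∀ n : ℕ, Function.Injective fun f : L.Functions n => φ.onFunction f) ∧
      (∀ n : ℕ, Function.Injective fun r : L.Relations n => φ.onRelation r) ∧
      Cardinal.lift.{u + 1} L'.card = Cardinal.lift.{u + 1} L.card + A.LS ∧
      ∃ (U : UniversalClass L' W) (F : UnivCat U ⥤ A.Cat),
        (∀ M' : UnivCat U, (F.obj M').1 = SetStruct.reduct φ M'.1) ∧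
        (∀ (M' N' : UnivCat U) (e : M' ⟶ N')
            (x : (F.obj M').1.carrier) (y : M'.1.carrier), (x : W) = (y : W) →
            ((aecHomEmb (F.map e)).toFun x : W) = ((univHomEmb e).toFun y : W)) ∧
        F.Faithful ∧ (∀ X : A.Cat, ∃ M' : UnivCat U, F.obj M' = X) ∧
        PreservesDirectedColimits.{u} F := by
  refine ⟨S6.LL A, S6.phi A, S6.phi_fun_inj A, S6.phi_rel_inj A, S6.card_LL A,
    S6.UU A, S6.FF A, fun M' => rfl, ?_, S6.FF_faithful A, S6.FF_surj A hne,
    S6.FF_preserves A⟩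
  intro M' N' e x y hxy
  have hxy' : x = y := Subtype.ext hxy
  have h2 := congrArg (fun z : M'.1.carrier => ((univHomEmb e).toFun z : W)) hxy'
  exact h2

end Paper
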